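/- In a pseudo-tensor category 𝒟, an object X is strongly faithful if and only if its dual X⁰ is strongly faithful. -/

import Mathlib

open CategoryTheory CategoryTheory.Limits CategoryTheory.MonoidalCategory

universe v u

/-- A morphism `f` is split if there is `g` with `f ∘ g ∘ f = f`. -/
def IsSplit {C : Type u} [Category.{v} C] {X Y : C} (f : X ⟶ Y) : Prop :=
  ∃ g : Y ⟶ X, f ≫ g ≫ f = f

/-- The sequence `X₂ ⟶ X₁ ⟶ X₀ ⟶ 0` is exact, i.e. `q` is a cokernel of `p`. -/
def IsCokernelSeq {C : Type u} [Category.{v} C] [Preadditive C] {X₂ X₁ X₀ : C}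
    (p : X₂ ⟶ X₁) (q : X₁ ⟶ X₀) : Prop :=
  p ≫ q = 0 ∧ ∀ ⦃A : C⦄ (h : X₁ ⟶ A), p ≫ h = 0 → ∃! t : X₀ ⟶ A, q ≫ t = h

/-- The sequence `0 ⟶ X₀ ⟶ X₁ ⟶ X₂` is exact, i.e. `i` is a kernel of `p`. -/
def IsKernelSeq {C : Type u} [Category.{v} C] [Preadditive C] {X₀ X₁ X₂ : C}
    (i : X₀ ⟶ X₁) (p : X₁ ⟶ X₂) : Prop :=
  i ≫ p = 0 ∧ ∀ ⦃A : C⦄ (h : A ⟶ X₁), h ≫ p = 0 → ∃! t : A ⟶ X₀, t ≫ i = h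

/-- The morphism `ℰ_X = ev_X ⊗ id_{X⁰⊗X} − id_{X⁰⊗X} ⊗ ev_X`. -/
def calE {C : Type u} [Category.{v} C] [Preadditive C] [MonoidalCategory C]
    (X Xd : C) [ExactPairing X Xd] : (Xd ⊗ X) ⊗ (Xd ⊗ X) ⟶ Xd ⊗ X :=
  (ε_ X Xd ▷ (Xd ⊗ X)) ≫ (λ_ (Xd ⊗ X)).hom -
    ((Xd ⊗ X) ◁ ε_ X Xd) ≫ (ρ_ (Xd ⊗ X)).hom

/-- `X` (with chosen dual `Xd`) is strongly faithful: `ev_X` is the cokernel of `ℰ_X`. -/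
def StronglyFaithful {C : Type u} [Category.{v} C] [Preadditive C]
    [MonoidalCategory C] (X Xd : C) [ExactPairing X Xd] : Prop :=
  IsCokernelSeq (calE X Xd) (ε_ X Xd)


section Aux

set_option linter.unusedSectionVars false

variable {C : Type u} [Category.{v} C] [MonoidalCategory C]


lemma sf_claim1 {W X : C} (η₂ : 𝟙_ C ⟶ W ⊗ X) (ε₁ ε₂ : X ⊗ W ⟶ 𝟙_ C)
    (h : η₂ ▷ W ≫ (α_ W X W).hom ≫ W ◁ ε₂ = (λ_ W).hom ≫ (ρ_ W).inv) :
    (((ρ_ X).inv ≫ X ◁ η₂ ≫ (α_ X W X).inv ≫ ε₁ ▷ X ≫ (λ_ X).hom) ▷ W) ≫ ε₂ = ε₁ := by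
  calc
    _ = 𝟙 (X ⊗ W) ⊗≫ X ◁ (η₂ ▷ W) ⊗≫ (ε₁ ▷ (X ⊗ W) ≫ 𝟙_ C ◁ ε₂) ⊗≫ 𝟙 (𝟙_ C) := by
      monoidal
    _ = 𝟙 (X ⊗ W) ⊗≫ X ◁ (η₂ ▷ W ≫ (α_ W X W).hom ≫ W ◁ ε₂) ⊗≫ ε₁ ⊗≫ 𝟙 (𝟙_ C) := by
      rw [← whisker_exchange]; monoidal
    _ = _ := by rw [h]; monoidal

lemma sf_claim2 {W X : C} (η₁ : 𝟙_ C ⟶ W ⊗ X) (ε₁ ε₂ : X ⊗ W ⟶ 𝟙_ C) (g : X ⟶ X)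
    (h1 : (g ▷ W) ≫ ε₂ = ε₁)
    (h2 : X ◁ η₁ ≫ (α_ X W X).inv ≫ ε₁ ▷ X = (ρ_ X).hom ≫ (λ_ X).inv) :
    g ≫ ((ρ_ X).inv ≫ X ◁ η₁ ≫ (α_ X W X).inv ≫ ε₂ ▷ X ≫ (λ_ X).hom) = 𝟙 X := by
  calc
    g ≫ ((ρ_ X).inv ≫ X ◁ η₁ ≫ (α_ X W X).inv ≫ ε₂ ▷ X ≫ (λ_ X).hom)
      = (ρ_ X).inv ≫ (g ▷ 𝟙_ C) ≫ X ◁ η₁ ≫ (α_ X W X).inv ≫ ε₂ ▷ X ≫ (λ_ X).hom := by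
        rw [← rightUnitor_inv_naturality_assoc]
    _ = (ρ_ X).inv ≫ X ◁ η₁ ≫ (g ▷ (W ⊗ X)) ≫ (α_ X W X).inv ≫ ε₂ ▷ X ≫ (λ_ X).hom := by
        rw [← whisker_exchange_assoc]
    _ = (ρ_ X).inv ≫ X ◁ η₁ ≫ (α_ X W X).inv ≫ ((g ▷ W) ▷ X) ≫ ε₂ ▷ X ≫ (λ_ X).hom := by
        rw [associator_inv_naturality_left_assoc]
    _ = (ρ_ X).inv ≫ X ◁ η₁ ≫ (α_ X W X).inv ≫ (ε₁ ▷ X) ≫ (λ_ X).hom := by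
        rw [← comp_whiskerRight_assoc, h1]
    _ = 𝟙 X := by rw [reassoc_of% h2]; simp

lemma sf_square [Preadditive C] {A B : C} (φ : A ⟶ B) (ε : B ⟶ 𝟙_ C) :
    (((φ ≫ ε) ▷ A) ≫ (λ_ A).hom - (A ◁ (φ ≫ ε)) ≫ (ρ_ A).hom) ≫ φ
      = (φ ⊗ₘ φ) ≫ ((ε ▷ B) ≫ (λ_ B).hom - (B ◁ ε) ≫ (ρ_ B).hom) := by
  rw [Preadditive.sub_comp, Preadditive.comp_sub]
  congr 1
  · rw [Category.assoc, ← leftUnitor_naturality, MonoidalCategory.tensorHom_def, comp_whiskerRight]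
    simp only [Category.assoc]
    rw [whisker_exchange_assoc]
  · rw [Category.assoc, ← rightUnitor_naturality, tensorHom_def', MonoidalCategory.whiskerLeft_comp]
    simp only [Category.assoc]
    rw [← whisker_exchange_assoc]

lemma IsCokernelSeq.of_iso [Preadditive C] {X₂ X₁ Y₂ Y₁ Z : C} {p : X₂ ⟶ X₁} {q : X₁ ⟶ Z}
    {p' : Y₂ ⟶ Y₁} {q' : Y₁ ⟶ Z} (e₂ : Y₂ ≅ X₂) (e₁ : Y₁ ≅ X₁)
    (hp : e₂.hom ≫ p = p' ≫ e₁.hom) (hq : e₁.hom ≫ q = q')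
    (H : IsCokernelSeq p q) : IsCokernelSeq p' q' := by
  obtain ⟨hz, huniv⟩ := H
  constructor
  · rw [← hq, ← Category.assoc, ← hp, Category.assoc, hz, Limits.comp_zero]
  · intro A h hh
    have hph : p ≫ (e₁.inv ≫ h) = 0 := by
      calc p ≫ e₁.inv ≫ h = e₂.inv ≫ ((e₂.hom ≫ p) ≫ e₁.inv) ≫ h := by simp
        _ = e₂.inv ≫ p' ≫ h := by rw [hp]; simp
        _ = 0 := by rw [hh, Limits.comp_zero]
    obtain ⟨t, ht, htu⟩ := huniv (e₁.inv ≫ h) hph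
    refine ⟨t, ?_, ?_⟩
    · show q' ≫ t = h
      rw [← hq, Category.assoc, ht, Iso.hom_inv_id_assoc]
    · intro t' ht'
      apply htu
      show q ≫ t' = e₁.inv ≫ h
      rw [← ht', ← hq]; simp


lemma sf_mp [Preadditive C] [BraidedCategory C] (X Xd : C)
    [ExactPairing X Xd] [ExactPairing Xd X]
    (H : StronglyFaithful X Xd) : StronglyFaithful Xd X := by
  set ε₂ : X ⊗ Xd ⟶ 𝟙_ C := (β_ X Xd).hom ≫ ε_ X Xd with hε₂
  set η₂ : 𝟙_ C ⟶ Xd ⊗ X := η_ X Xd ≫ (β_ Xd X).inv with hη₂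
  have hP_ec : η₂ ▷ Xd ≫ (α_ Xd X Xd).hom ≫ Xd ◁ ε₂ = (λ_ Xd).hom ≫ (ρ_ Xd).inv :=
    (BraidedCategory.exactPairing_swap X Xd).evaluation_coevaluation'
  have hP_ce : X ◁ η₂ ≫ (α_ X Xd X).inv ≫ ε₂ ▷ X = (ρ_ X).hom ≫ (λ_ X).inv :=
    (BraidedCategory.exactPairing_swap X Xd).coevaluation_evaluation'
  set g : X ⟶ X := (ρ_ X).inv ≫ X ◁ η₂ ≫ (α_ X Xd X).inv ≫ ε_ Xd X ▷ X ≫ (λ_ X).hom with hg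
  set g' : X ⟶ X := (ρ_ X).inv ≫ X ◁ η_ Xd X ≫ (α_ X Xd X).inv ≫ ε₂ ▷ X ≫ (λ_ X).hom with hg'
  have h1 : (g ▷ Xd) ≫ ε₂ = ε_ Xd X := sf_claim1 η₂ (ε_ Xd X) ε₂ hP_ec
  have h1' : (g' ▷ Xd) ≫ ε_ Xd X = ε₂ :=
    sf_claim1 (η_ Xd X) ε₂ (ε_ Xd X) (ExactPairing.evaluation_coevaluation Xd X)
  have hgg' : g ≫ g' = 𝟙 X :=
    sf_claim2 (η_ Xd X) (ε_ Xd X) ε₂ g h1 (ExactPairing.coevaluation_evaluation Xd X)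
  have hg'g : g' ≫ g = 𝟙 X := sf_claim2 η₂ ε₂ (ε_ Xd X) g' h1' hP_ce
  let gIso : X ≅ X := ⟨g, g', hgg', hg'g⟩
  let φ : X ⊗ Xd ≅ Xd ⊗ X := whiskerRightIso gIso Xd ≪≫ β_ X Xd
  have hφ : φ.hom = (g ▷ Xd) ≫ (β_ X Xd).hom := rfl
  have hφε : φ.hom ≫ ε_ X Xd = ε_ Xd X := by
    rw [hφ, Category.assoc, ← hε₂, h1]
  have hsq : (φ.hom ⊗ₘ φ.hom) ≫ calE X Xd = calE Xd X ≫ φ.hom := by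
    have h := sf_square φ.hom (ε_ X Xd)
    rw [hφε] at h
    exact h.symm
  exact IsCokernelSeq.of_iso (tensorIso φ φ) φ hsq hφε H

end Aux

/-- `X` is strongly faithful iff its dual `X⁰` is strongly faithful. -/
theorem stmt10 {k : Type*} [Field k] {C : Type u} [Category.{v} C] [Preadditive C]
    [Linear k C] [MonoidalCategory C] [SymmetricCategory C] [MonoidalPreadditive C]
    [MonoidalLinear k C] [RigidCategory C] [IsIdempotentComplete C]
    (hEnd : Function.Bijective fun a : k => a • (𝟙 (𝟙_ C)))
    (X Xd : C) [ExactPairing X Xd] [ExactPairing Xd X] :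
    StronglyFaithful X Xd ↔ StronglyFaithful Xd X :=
  ⟨sf_mp X Xd, sf_mp Xd X⟩
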